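/- Let φ, ψ : B³ × [0,1] → ℝ³ be continuous maps, where B³ is the closed unit ball in ℝ³, such that (1) φ and ψ are α-Hölder in t uniformly in x, and (2) for any t, s ∈ [0,1], the function x ↦ φ(x,t) − ψ(x,s) is bi-Lipschitz in x with uniform constants. Then the Hausdorff dimension of the set Δ = {x ∈ B³ : φ(x,[0,1]) ∩ ψ(x,[0,1]) ≠ ∅} is at most 2/α. -/

import Mathlib

open Set Metric ENNReal NNReal

noncomputable section

theorem stmt_5
    (φ ψ : EuclideanSpace ℝ (Fin 3) → ℝ → EuclideanSpace ℝ (Fin 3))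
    (α M c L : ℝ) (hα0 : 0 < α) (hα1 : α ≤ 1) (hc : 0 < c) (hcL : c ≤ L)
    (hφcont : Continuous fun p : EuclideanSpace ℝ (Fin 3) × ℝ => φ p.1 p.2)
    (hψcont : Continuous fun p : EuclideanSpace ℝ (Fin 3) × ℝ => ψ p.1 p.2)
    (hφHolder : ∀ x ∈ closedBall (0 : EuclideanSpace ℝ (Fin 3)) 1,
      ∀ t ∈ Icc (0:ℝ) 1, ∀ s ∈ Icc (0:ℝ) 1, ‖φ x t - φ x s‖ ≤ M * |t - s| ^ α)
    (hψHolder : ∀ x ∈ closedBall (0 : EuclideanSpace ℝ (Fin 3)) 1,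
      ∀ t ∈ Icc (0:ℝ) 1, ∀ s ∈ Icc (0:ℝ) 1, ‖ψ x t - ψ x s‖ ≤ M * |t - s| ^ α)
    (hbilip : ∀ t ∈ Icc (0:ℝ) 1, ∀ s ∈ Icc (0:ℝ) 1,
      ∀ x₁ ∈ closedBall (0 : EuclideanSpace ℝ (Fin 3)) 1,
      ∀ x₂ ∈ closedBall (0 : EuclideanSpace ℝ (Fin 3)) 1,
        c * ‖x₁ - x₂‖ ≤ ‖(φ x₁ t - ψ x₁ s) - (φ x₂ t - ψ x₂ s)‖ ∧
        ‖(φ x₁ t - ψ x₁ s) - (φ x₂ t - ψ x₂ s)‖ ≤ L * ‖x₁ - x₂‖) :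
    dimH {x | x ∈ closedBall (0 : EuclideanSpace ℝ (Fin 3)) 1 ∧
        ((fun t => φ x t) '' Icc (0:ℝ) 1 ∩ (fun t => ψ x t) '' Icc (0:ℝ) 1).Nonempty} ≤
      2 / ENNReal.ofReal α := by
  classical
  set B := closedBall (0 : EuclideanSpace ℝ (Fin 3)) 1 with hB
  -- M is nonnegative
  have hM : 0 ≤ M := by
    have h0 : (0 : EuclideanSpace ℝ (Fin 3)) ∈ B := mem_closedBall_self zero_le_one
    have := hφHolder 0 h0 0 ⟨le_refl 0, zero_le_one⟩ 1 ⟨zero_le_one, le_refl 1⟩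
    have h1 : |(0:ℝ) - 1| ^ α = 1 := by
      rw [show |(0:ℝ) - 1| = 1 by norm_num, Real.one_rpow]
    rw [h1, mul_one] at this
    exact le_trans (norm_nonneg _) this
  set S : Set (ℝ × ℝ) :=
    {p | p.1 ∈ Icc (0:ℝ) 1 ∧ p.2 ∈ Icc (0:ℝ) 1 ∧ ∃ x ∈ B, φ x p.1 = ψ x p.2} with hS
  set g : ℝ × ℝ → EuclideanSpace ℝ (Fin 3) := fun p =>
    if h : ∃ x ∈ B, φ x p.1 = ψ x p.2 then h.choose else 0 with hg
  have hgspec : ∀ p : ℝ × ℝ, ∀ h : ∃ x ∈ B, φ x p.1 = ψ x p.2,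
      g p ∈ B ∧ φ (g p) p.1 = ψ (g p) p.2 := by
    intro p h
    simp only [hg, dif_pos h]
    exact ⟨h.choose_spec.1, h.choose_spec.2⟩
  -- uniqueness of the intersection point
  have huniq : ∀ p ∈ S, ∀ x ∈ B, φ x p.1 = ψ x p.2 → x = g p := by
    rintro p ⟨hp1, hp2, hex⟩ x hx hxe
    obtain ⟨hgB, hge⟩ := hgspec p hex
    have hkey := (hbilip p.1 hp1 p.2 hp2 x hx (g p) hgB).1
    rw [sub_eq_zero.2 hxe, sub_eq_zero.2 hge, sub_zero, norm_zero] at hkey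
    have h0 : ‖x - g p‖ ≤ 0 := by nlinarith [norm_nonneg (x - g p)]
    exact sub_eq_zero.1 (norm_le_zero_iff.1 h0)
  -- distance (Hölder) estimate
  have hdist : ∀ p ∈ S, ∀ q ∈ S,
      dist (g p) (g q) ≤ (2 * M / c) * dist p q ^ α := by
    rintro p ⟨hp1, hp2, hpex⟩ q ⟨hq1, hq2, hqex⟩
    obtain ⟨hxB, hxe⟩ := hgspec p hpex
    obtain ⟨hyB, hye⟩ := hgspec q hqex
    set x := g p
    set y := g q
    have hkey := (hbilip q.1 hq1 q.2 hq2 x hxB y hyB).1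
    rw [sub_eq_zero.2 hye, sub_zero] at hkey
    have hrw : φ x q.1 - ψ x q.2 =
        (φ x q.1 - φ x p.1) - (ψ x q.2 - ψ x p.2) + (φ x p.1 - ψ x p.2) := by abel
    have hnorm : ‖φ x q.1 - ψ x q.2‖ ≤ M * |q.1 - p.1| ^ α + M * |q.2 - p.2| ^ α := by
      rw [hrw, sub_eq_zero.2 hxe, add_zero]
      calc ‖(φ x q.1 - φ x p.1) - (ψ x q.2 - ψ x p.2)‖
          ≤ ‖φ x q.1 - φ x p.1‖ + ‖ψ x q.2 - ψ x p.2‖ := norm_sub_le _ _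
        _ ≤ M * |q.1 - p.1| ^ α + M * |q.2 - p.2| ^ α :=
            add_le_add (hφHolder x hxB q.1 hq1 p.1 hp1) (hψHolder x hxB q.2 hq2 p.2 hp2)
    have hd1 : |q.1 - p.1| ^ α ≤ dist p q ^ α := by
      apply Real.rpow_le_rpow (abs_nonneg _) _ hα0.le
      rw [← Real.dist_eq, dist_comm]
      exact (le_max_left _ _).trans_eq (Prod.dist_eq (x := p) (y := q)).symm
    have hd2 : |q.2 - p.2| ^ α ≤ dist p q ^ α := by
      apply Real.rpow_le_rpow (abs_nonneg _) _ hα0.le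
      rw [← Real.dist_eq, dist_comm]
      exact (le_max_right _ _).trans_eq (Prod.dist_eq (x := p) (y := q)).symm
    have hchain : c * ‖x - y‖ ≤ 2 * M * dist p q ^ α := by
      nlinarith [mul_le_mul_of_nonneg_left hd1 hM, mul_le_mul_of_nonneg_left hd2 hM]
    rw [dist_eq_norm, div_mul_eq_mul_div, le_div_iff₀ hc]
    nlinarith
  -- the Hölder map g on S
  have hHolder : HolderOnWith (Real.toNNReal (2 * M / c)) (Real.toNNReal α) g S := by
    intro p hp q hq
    have key : edist (g p) (g q) ≤
        ENNReal.ofReal (2 * M / c) * edist p q ^ (α : ℝ) := by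
      rw [edist_dist, edist_dist,
        ENNReal.ofReal_rpow_of_nonneg dist_nonneg hα0.le,
        ← ENNReal.ofReal_mul (by positivity)]
      exact ENNReal.ofReal_le_ofReal (hdist p hp q hq)
    simpa [ENNReal.ofReal, Real.coe_toNNReal α hα0.le] using key
  have hrpos : 0 < Real.toNNReal α := Real.toNNReal_pos.2 hα0
  -- the target set is contained in g '' S
  have hsub : {x | x ∈ B ∧
      ((fun t => φ x t) '' Icc (0:ℝ) 1 ∩ (fun t => ψ x t) '' Icc (0:ℝ) 1).Nonempty}
      ⊆ g '' S := by
    rintro x ⟨hxB, y, ⟨t, ht, hφt⟩, ⟨s, hs, hψs⟩⟩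
    have heq : φ x t = ψ x s := hφt.trans hψs.symm
    have hpS : ((t, s) : ℝ × ℝ) ∈ S := ⟨ht, hs, x, hxB, heq⟩
    exact ⟨(t, s), hpS, (huniq (t, s) hpS x hxB heq).symm⟩
  calc dimH {x | x ∈ B ∧
        ((fun t => φ x t) '' Icc (0:ℝ) 1 ∩ (fun t => ψ x t) '' Icc (0:ℝ) 1).Nonempty}
      ≤ dimH (g '' S) := dimH_mono hsub
    _ ≤ dimH S / (Real.toNNReal α : ℝ≥0∞) := hHolder.dimH_image_le hrpos
    _ ≤ dimH (univ : Set (ℝ × ℝ)) / (Real.toNNReal α : ℝ≥0∞) := by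
        gcongr
        exact subset_univ _
    _ = 2 / ENNReal.ofReal α := by
        rw [Real.dimH_univ_eq_finrank (ℝ × ℝ)]
        norm_num [ENNReal.ofReal]
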